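/- Let η, ζ ∈ ℂ⟦u,v⟧ with η ≠ 0 and with constant coefficient ζ(0,0) ≠ 0. Then the Newton polygons coincide: N(η·ζ) = N(η). (Invariance of the Newton polygon of an effective divisor on (ℂ²,0) under change of defining series, part (1) of the paper's Proposition 7.10.) -/

import Mathlib

open scoped Pointwise

/-- The nonnegative quadrant `σ∨ = [0,∞)² ⊆ ℝ²`. -/
def quadrant : Set (ℝ × ℝ) := {x | 0 ≤ x.1 ∧ 0 ≤ x.2}

/-- The support of `η`, viewed inside `ℝ²`. -/
noncomputable def suppR (η : MvPowerSeries (Fin 2) ℂ) : Set (ℝ × ℝ) :=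
  (fun pq : ℕ × ℕ => ((pq.1 : ℝ), (pq.2 : ℝ))) ''
    {pq : ℕ × ℕ |
      MvPowerSeries.coeff (Finsupp.single 0 pq.1 + Finsupp.single 1 pq.2) η ≠ 0}

/-- The Newton polygon of `η`: the convex hull of the Minkowski sum of the support of `η`
and the nonnegative quadrant. -/
noncomputable def newtonPolygon (η : MvPowerSeries (Fin 2) ℂ) : Set (ℝ × ℝ) :=
  convexHull ℝ (suppR η + quadrant)

lemma finsupp_fin2_eq (d : Fin 2 →₀ ℕ) :
    d = Finsupp.single 0 (d 0) + Finsupp.single 1 (d 1) := by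
  ext i
  fin_cases i <;> simp

lemma coeff_pair (X : MvPowerSeries (Fin 2) ℂ) (e : Fin 2 →₀ ℕ) :
    MvPowerSeries.coeff (Finsupp.single 0 (e 0) + Finsupp.single 1 (e 1)) X
      = MvPowerSeries.coeff e X := by
  rw [← finsupp_fin2_eq]

/-- Easy direction: any support point of η·ζ dominates a support point of η. -/
lemma exists_supp_of_mul (η ζ : MvPowerSeries (Fin 2) ℂ) (d : Fin 2 →₀ ℕ)
    (hd : MvPowerSeries.coeff d (η * ζ) ≠ 0) :
    ∃ e : Fin 2 →₀ ℕ, e 0 ≤ d 0 ∧ e 1 ≤ d 1 ∧ MvPowerSeries.coeff e η ≠ 0 := by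
  rw [MvPowerSeries.coeff_mul] at hd
  obtain ⟨b, hb, hne⟩ := Finset.exists_ne_zero_of_sum_ne_zero hd
  have hsum : b.1 + b.2 = d := Finset.HasAntidiagonal.mem_antidiagonal.mp hb
  refine ⟨b.1, ?_, ?_, left_ne_zero_of_mul hne⟩
  · have : (b.1 + b.2) 0 = d 0 := by rw [hsum]
    simpa using le_of_add_le_left this.le
  · have : (b.1 + b.2) 1 = d 1 := by rw [hsum]
    simpa using le_of_add_le_left this.le

/-- Hard direction: any support point of η dominates a support point of η·ζ. -/
lemma exists_supp_mul (η ζ : MvPowerSeries (Fin 2) ℂ)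
    (hζ : MvPowerSeries.constantCoeff ζ ≠ 0)
    (d : Fin 2 →₀ ℕ) (hd : MvPowerSeries.coeff d η ≠ 0) :
    ∃ e : Fin 2 →₀ ℕ, e 0 ≤ d 0 ∧ e 1 ≤ d 1 ∧ MvPowerSeries.coeff e (η * ζ) ≠ 0 := by
  classical
  set P : ℕ → Prop := fun n => ∃ e : Fin 2 →₀ ℕ,
      e 0 ≤ d 0 ∧ e 1 ≤ d 1 ∧ MvPowerSeries.coeff e η ≠ 0 ∧ e 0 + e 1 = n with hPdef
  have hPex : ∃ n, P n := ⟨d 0 + d 1, d, le_rfl, le_rfl, hd, rfl⟩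
  obtain ⟨e, he0, he1, heη, hen⟩ := Nat.find_spec hPex
  -- minimality: any f strictly below e (in the additive sense) has zero coefficient in η
  have hmin : ∀ f g : Fin 2 →₀ ℕ, f + g = e → g ≠ 0 → MvPowerSeries.coeff f η = 0 := by
    intro f g hfg hg
    by_contra hne
    have hf0 : f 0 ≤ e 0 := by
      have : (f + g) 0 = e 0 := by rw [hfg]
      simpa using le_of_add_le_left this.le
    have hf1 : f 1 ≤ e 1 := by
      have : (f + g) 1 = e 1 := by rw [hfg]
      simpa using le_of_add_le_left this.le
    have hlt : f 0 + f 1 < e 0 + e 1 := by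
      have hgpos : 0 < g 0 + g 1 := by
        rcases Finsupp.ne_iff.mp hg with ⟨i, hi⟩
        fin_cases i <;> simp at hi <;> omega
      have h0 : f 0 + g 0 = e 0 := by
        have : (f + g) 0 = e 0 := by rw [hfg]
        simpa using this
      have h1 : f 1 + g 1 = e 1 := by
        have : (f + g) 1 = e 1 := by rw [hfg]
        simpa using this
      omega
    exact Nat.find_min hPex (hen ▸ hlt) ⟨f, hf0.trans he0, hf1.trans he1, hne, rfl⟩
  refine ⟨e, he0, he1, ?_⟩
  rw [MvPowerSeries.coeff_mul]
  rw [Finset.sum_eq_single (e, (0 : Fin 2 →₀ ℕ))]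
  · simp only [MvPowerSeries.coeff_zero_eq_constantCoeff]
    exact mul_ne_zero heη hζ
  · rintro ⟨p, q⟩ hb hne
    have hsum : p + q = e := Finset.HasAntidiagonal.mem_antidiagonal.mp hb
    have hq : q ≠ 0 := by
      rintro rfl
      simp only [add_zero] at hsum
      exact hne (by rw [hsum])
    rw [hmin p q hsum hq, zero_mul]
  · intro h
    exact absurd (Finset.HasAntidiagonal.mem_antidiagonal.mpr (add_zero e)) h

lemma subset_aux {A B : Set (ℝ × ℝ)}
    (h : ∀ s ∈ A, ∃ b ∈ B, b.1 ≤ s.1 ∧ b.2 ≤ s.2) :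
    A + quadrant ⊆ B + quadrant := by
  rintro x hx
  rw [Set.mem_add] at hx
  obtain ⟨a, ha, c, hc, rfl⟩ := hx
  obtain ⟨b, hb, hb1, hb2⟩ := h a ha
  rw [Set.mem_add]
  refine ⟨b, hb, a + c - b, ⟨?_, ?_⟩, by ring⟩
  · simpa using by have := hc.1; simp only [quadrant, Set.mem_setOf_eq] at hc ⊢
                   push_cast [Prod.fst_sub, Prod.fst_add]
                   linarith [hc.1]
  · simp only [quadrant, Set.mem_setOf_eq] at hc ⊢
    have : (a + c - b).2 = a.2 + c.2 - b.2 := rfl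
    linarith [hc.2]

/-- if `η ≠ 0` and `ζ` has nonzero constant coefficient, then
`N(η·ζ) = N(η)`. -/
theorem newtonPolygon_mul_unit (η ζ : MvPowerSeries (Fin 2) ℂ) (hη : η ≠ 0)
    (hζ : MvPowerSeries.constantCoeff ζ ≠ 0) :
    newtonPolygon (η * ζ) = newtonPolygon η := by
  have key : suppR (η * ζ) + quadrant = suppR η + quadrant := by
    apply Set.Subset.antisymm
    · apply subset_aux
      rintro s ⟨pq, hc, rfl⟩
      obtain ⟨e, h0, h1, hne⟩ := exists_supp_of_mul η ζ _ hc
      have h0' : e 0 ≤ pq.1 := by simpa using h0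
      have h1' : e 1 ≤ pq.2 := by simpa using h1
      exact ⟨(↑(e 0), ↑(e 1)), ⟨(e 0, e 1), by simpa using (coeff_pair η e).symm ▸ hne, rfl⟩,
        by exact Nat.cast_le.mpr h0', by exact Nat.cast_le.mpr h1'⟩
    · apply subset_aux
      rintro s ⟨pq, hc, rfl⟩
      obtain ⟨e, h0, h1, hne⟩ := exists_supp_mul η ζ hζ _ hc
      have h0' : e 0 ≤ pq.1 := by simpa using h0
      have h1' : e 1 ≤ pq.2 := by simpa using h1
      exact ⟨(↑(e 0), ↑(e 1)), ⟨(e 0, e 1), by simpa using (coeff_pair (η * ζ) e).symm ▸ hne, rfl⟩,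
        by exact Nat.cast_le.mpr h0', by exact Nat.cast_le.mpr h1'⟩
  unfold newtonPolygon
  rw [key]
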